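/- Suppose m ≥ 1, L₁,...,L_m > 0, μ > 0 with √μ ≤ (∑ⱼ√Lⱼ)/m. Set λ = √μ/(4∑ⱼ√Lⱼ), π_i = √L_i/(2∑ⱼ√Lⱼ) + 1/(2m), τ_i = λ/π_i, η = 1/(4√μ·∑ⱼ√Lⱼ). Then for every i: 0 ≤ τ_i ≤ 1/2 and ∑ⱼ τⱼLⱼ + L_iτ_i/(π_i(1 − τ_i)) ≤ 3√μ·∑ⱼ√Lⱼ ≤ 1/η − something nonnegative, i.e., 1/η − ∑ⱼ τⱼLⱼ ≥ L_iτ_i/(π_i(1 − τ_i)). -/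

import Mathlib

/-- Parameter choices for the generalized SSNM: with `√μ ≤ (∑ⱼ√Lⱼ)/m`,
`λ = √μ/(4∑ⱼ√Lⱼ)`, `πᵢ = √Lᵢ/(2∑ⱼ√Lⱼ) + 1/(2m)`, `τᵢ = λ/πᵢ`,
`η = 1/(4√μ·∑ⱼ√Lⱼ)`, we have for every `i`: `0 ≤ τᵢ ≤ 1/2`,
`∑ⱼ τⱼLⱼ + Lᵢτᵢ/(πᵢ(1−τᵢ)) ≤ 3√μ·∑ⱼ√Lⱼ ≤ 1/η`, and hence
`1/η − ∑ⱼ τⱼLⱼ ≥ Lᵢτᵢ/(πᵢ(1−τᵢ))`. -/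
theorem stmt_16 (m : ℕ) (hm : 1 ≤ m) (L : Fin m → ℝ) (μ : ℝ)
    (hL : ∀ i, 0 < L i) (hμ : 0 < μ)
    (hcond : Real.sqrt μ ≤ (∑ j, Real.sqrt (L j)) / m)
    (lam η : ℝ) (π τ : Fin m → ℝ)
    (hlam : lam = Real.sqrt μ / (4 * ∑ j, Real.sqrt (L j)))
    (hπ : ∀ i, π i = Real.sqrt (L i) / (2 * ∑ j, Real.sqrt (L j)) + 1 / (2 * m))
    (hτ : ∀ i, τ i = lam / π i)
    (hη : η = 1 / (4 * Real.sqrt μ * ∑ j, Real.sqrt (L j))) :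
    ∀ i, 0 ≤ τ i ∧ τ i ≤ 1 / 2 ∧
      (∑ j, τ j * L j) + L i * τ i / (π i * (1 - τ i))
        ≤ 3 * Real.sqrt μ * ∑ j, Real.sqrt (L j) ∧
      3 * Real.sqrt μ * (∑ j, Real.sqrt (L j)) ≤ 1 / η ∧
      1 / η - (∑ j, τ j * L j) ≥ L i * τ i / (π i * (1 - τ i)) := by
  intro i
  have hm' : (0:ℝ) < m := by exact_mod_cast hm
  set S := ∑ j, Real.sqrt (L j) with hSdef
  have hS : 0 < S :=
    Finset.sum_pos (fun j _ => Real.sqrt_pos.2 (hL j)) ⟨i, Finset.mem_univ i⟩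
  have hμs : 0 < Real.sqrt μ := Real.sqrt_pos.2 hμ
  have hmS : (m:ℝ) * Real.sqrt μ ≤ S := by
    rw [mul_comm]
    exact (le_div_iff₀ hm').mp hcond
  have hlampos : 0 < lam := by rw [hlam]; positivity
  have hπpos : ∀ j, 0 < π j := fun j => by
    rw [hπ j]
    have := Real.sqrt_nonneg (L j)
    positivity
  have hτpos : ∀ j, 0 < τ j := fun j => by
    rw [hτ j]; exact div_pos hlampos (hπpos j)
  have hτπ : ∀ j, τ j * π j = lam := fun j => by
    rw [hτ j, div_mul_cancel₀ _ (hπpos j).ne']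
  have hlamS : lam * (4 * S) = Real.sqrt μ := by
    rw [hlam]; field_simp
  have hπlb1 : ∀ j, 1 ≤ 2 * m * π j := fun j => by
    rw [hπ j]
    have h1 : 0 ≤ Real.sqrt (L j) / (2 * S) := by positivity
    have h2 : 2 * (m:ℝ) * (1 / (2 * m)) = 1 := by field_simp
    nlinarith
  have hπlb2 : ∀ j, Real.sqrt (L j) ≤ 2 * S * π j := fun j => by
    rw [hπ j]
    have h1 : 2 * S * (Real.sqrt (L j) / (2 * S)) = Real.sqrt (L j) := by field_simp
    have h2 : 0 ≤ 1 / (2 * (m:ℝ)) := by positivity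
    nlinarith
  -- τ j ≤ 1/2
  have hτle : ∀ j, τ j ≤ 1 / 2 := fun j => by
    have h1 : τ j * 1 ≤ τ j * (2 * m * π j) :=
      mul_le_mul_of_nonneg_left (hπlb1 j) (hτpos j).le
    have h2 : τ j * (2 * m * π j) = 2 * m * lam := by
      have := hτπ j; nlinarith [hτπ j]
    nlinarith [hlamS, hmS, hS, hlampos]
  -- per-term bound
  have hkey : ∀ j, τ j * Real.sqrt (L j) ≤ Real.sqrt μ / 2 := fun j => by
    have h1 : τ j * Real.sqrt (L j) ≤ τ j * (2 * S * π j) :=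
      mul_le_mul_of_nonneg_left (hπlb2 j) (hτpos j).le
    nlinarith [hτπ j, hlamS]
  have hterm : ∀ j, τ j * L j ≤ Real.sqrt μ / 2 * Real.sqrt (L j) := fun j => by
    have hsq : Real.sqrt (L j) * Real.sqrt (L j) = L j :=
      Real.mul_self_sqrt (hL j).le
    calc τ j * L j = (τ j * Real.sqrt (L j)) * Real.sqrt (L j) := by rw [mul_assoc, hsq]
    _ ≤ (Real.sqrt μ / 2) * Real.sqrt (L j) :=
      mul_le_mul_of_nonneg_right (hkey j) (Real.sqrt_nonneg _)
  have hsum : (∑ j, τ j * L j) ≤ Real.sqrt μ / 2 * S := by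
    rw [hSdef, Finset.mul_sum]
    exact Finset.sum_le_sum fun j _ => hterm j
  -- big term bound
  have hLτ : L i * τ i ≤ Real.sqrt μ * S * π i := by
    have hsq : Real.sqrt (L i) * Real.sqrt (L i) = L i :=
      Real.mul_self_sqrt (hL i).le
    have h1 : L i * τ i = Real.sqrt (L i) * (τ i * Real.sqrt (L i)) := by
      linear_combination (-(τ i)) * hsq
    rw [h1]
    have h2 := mul_le_mul (hπlb2 i) (hkey i)
      (mul_nonneg (hτpos i).le (Real.sqrt_nonneg _))
      (mul_nonneg (by positivity : (0:ℝ) ≤ 2 * S) (hπpos i).le)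
    nlinarith [h2]
  have hden : π i / 2 ≤ π i * (1 - τ i) := by
    have := hτle i
    nlinarith [hπpos i]
  have hT : L i * τ i / (π i * (1 - τ i)) ≤ 2 * Real.sqrt μ * S := by
    have h1 : L i * τ i / (π i * (1 - τ i)) ≤ (Real.sqrt μ * S * π i) / (π i / 2) :=
      div_le_div₀ (mul_nonneg (mul_nonneg hμs.le hS.le) (hπpos i).le) hLτ (half_pos (hπpos i)) hden
    have h2 : (Real.sqrt μ * S * π i) / (π i / 2) = 2 * Real.sqrt μ * S := by
      field_simp [(hπpos i).ne']
    linarith [h1, h2.le]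
  have hηval : 1 / η = 4 * Real.sqrt μ * S := by
    rw [hη, one_div_one_div]
  have h5 : 0 ≤ Real.sqrt μ * S := mul_nonneg hμs.le hS.le
  refine ⟨(hτpos i).le, hτle i, ?_, ?_, ?_⟩
  · linarith [hsum, hT, h5]
  · rw [hηval]; linarith [h5]
  · rw [hηval]; linarith [hsum, hT, h5]
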